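/- Let X, P, Y be real Banach spaces, F : X × P ⇒ Y and G : X ⇒ Y be multifunctions. Suppose F is Lipschitz-like with respect to x uniformly in p around ((x̄,p̄),ȳ) ∈ Gr F with constant l > 0, G is Lipschitz-like around (x̄,z̄) ∈ Gr G with constant k > 0, and the pair (F,G) is locally sum-stable around (x̄,p̄,ȳ,z̄). Then the multifunction H : X × P ⇒ Y defined by H(x,p) := F(x,p) + G(x) is Lipschitz-like with respect to x uniformly in p around ((x̄,p̄), ȳ + z̄) with constant l + k. -/

import Mathlib

open Metric Set Filter Topology Pointwise

/-- `F : X × P ⇒ Y` is Lipschitz-like with respect to `x` uniformly in `p`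
around `((xb, pb), yb)` with constant `L`. -/
def LipschitzLikeWrtXUnifP {X P Y : Type*} [NormedAddCommGroup X]
    [NormedAddCommGroup P] [NormedAddCommGroup Y] (F : X × P → Set Y)
    (xb : X) (pb : P) (yb : Y) (L : ℝ) : Prop :=
  ∃ U ∈ 𝓝 xb, ∃ V ∈ 𝓝 pb, ∃ W ∈ 𝓝 yb, ∀ p ∈ V, ∀ x ∈ U, ∀ u ∈ U,
    F (x, p) ∩ W ⊆ F (u, p) + closedBall (0 : Y) (L * ‖x - u‖)

/-- `G : X ⇒ Y` is Lipschitz-like around `(xb, zb)` with constant `L`. -/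
def LipschitzLikeAround {X Y : Type*} [NormedAddCommGroup X] [NormedAddCommGroup Y]
    (G : X → Set Y) (xb : X) (zb : Y) (L : ℝ) : Prop :=
  ∃ U ∈ 𝓝 xb, ∃ V ∈ 𝓝 zb, ∀ x ∈ U, ∀ u ∈ U,
    G x ∩ V ⊆ G u + closedBall (0 : Y) (L * ‖x - u‖)

/-- The pair `(F, G)` is locally sum-stable around `(xb, pb, yb, zb)`. -/
def LocSumStableP {X P Y : Type*} [NormedAddCommGroup X] [NormedAddCommGroup P]
    [NormedAddCommGroup Y] (F : X × P → Set Y) (G : X → Set Y)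
    (xb : X) (pb : P) (yb zb : Y) : Prop :=
  ∀ ε > (0 : ℝ), ∃ δ > (0 : ℝ), ∀ x ∈ ball xb δ, ∀ p ∈ ball pb δ,
    ∀ w ∈ (F (x, p) + G x) ∩ ball (yb + zb) δ,
      ∃ y ∈ F (x, p) ∩ ball yb ε, ∃ z ∈ G x ∩ ball zb ε, w = y + z

/-- parametric sum of Lipschitz-like multifunctions. -/
theorem stmt12 {X P Y : Type*}
    [NormedAddCommGroup X] [NormedSpace ℝ X] [CompleteSpace X]
    [NormedAddCommGroup P] [NormedSpace ℝ P] [CompleteSpace P]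
    [NormedAddCommGroup Y] [NormedSpace ℝ Y] [CompleteSpace Y]
    (F : X × P → Set Y) (G : X → Set Y) (xb : X) (pb : P) (yb zb : Y)
    (hybF : yb ∈ F (xb, pb)) (hzbG : zb ∈ G xb)
    (l k : ℝ) (hl : 0 < l) (hk : 0 < k)
    (hF : LipschitzLikeWrtXUnifP F xb pb yb l)
    (hG : LipschitzLikeAround G xb zb k)
    (hsum : LocSumStableP F G xb pb yb zb) :
    LipschitzLikeWrtXUnifP (fun q => F q + G q.1) xb pb (yb + zb) (l + k) := by
  obtain ⟨UF, hUF, VF, hVF, WF, hWF, hFlip⟩ := hF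
  obtain ⟨UG, hUG, VG, hVG, hGlip⟩ := hG
  obtain ⟨ε1, hε1, hε1sub⟩ := Metric.mem_nhds_iff.1 hWF
  obtain ⟨ε2, hε2, hε2sub⟩ := Metric.mem_nhds_iff.1 hVG
  set ε := min ε1 ε2 with hε
  have hεpos : 0 < ε := lt_min hε1 hε2
  obtain ⟨δ, hδpos, hstab⟩ := hsum ε hεpos
  refine ⟨ball xb δ ∩ (UF ∩ UG), ?_, ball pb δ ∩ VF, ?_, ball (yb + zb) δ, ?_, ?_⟩
  · exact inter_mem (ball_mem_nhds _ hδpos) (inter_mem hUF hUG)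
  · exact inter_mem (ball_mem_nhds _ hδpos) hVF
  · exact ball_mem_nhds _ hδpos
  · rintro p ⟨hpδ, hpVF⟩ x ⟨hxδ, hxUF, hxUG⟩ u ⟨huδ, huUF, huUG⟩ w ⟨hwFG, hwW⟩
    obtain ⟨y, ⟨hyF, hyb⟩, z, ⟨hzG, hzb⟩, rfl⟩ :=
      hstab x hxδ p hpδ _ ⟨hwFG, hwW⟩
    have hyWF : y ∈ WF := hε1sub (ball_subset_ball (min_le_left _ _) hyb)
    have hzVG : z ∈ VG := hε2sub (ball_subset_ball (min_le_right _ _) hzb)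
    obtain ⟨y', hy'F, a, ha, hya⟩ := hFlip p hpVF x hxUF u huUF ⟨hyF, hyWF⟩
    obtain ⟨z', hz'G, b, hb, hzb'⟩ := hGlip x hxUG u huUG ⟨hzG, hzVG⟩
    refine ⟨y' + z', add_mem_add hy'F hz'G, a + b, ?_, by rw [← hya, ← hzb']; dsimp only; abel⟩
    simp only [mem_closedBall, dist_zero_right] at ha hb ⊢
    calc ‖a + b‖ ≤ ‖a‖ + ‖b‖ := norm_add_le a b
      _ ≤ l * ‖x - u‖ + k * ‖x - u‖ := add_le_add ha hb
      _ = (l + k) * ‖x - u‖ := by ring
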